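/- For every μ > 0 and every ε ≥ 0, the quantity f(μ, ε) = Φ(μ/2 - ε/μ) - e^ε Φ(-μ/2 - ε/μ) satisfies 0 ≤ f(μ, ε) < 1. -/

import Mathlib

noncomputable def stdNormalPDF (x : ℝ) : ℝ :=
  (Real.sqrt (2 * Real.pi))⁻¹ * Real.exp (-x ^ 2 / 2)

noncomputable def stdNormalCDF (x : ℝ) : ℝ := ∫ t in Set.Iic x, stdNormalPDF t

noncomputable def gaussF (μ ε : ℝ) : ℝ :=
  stdNormalCDF (μ / 2 - ε / μ) - Real.exp ε * stdNormalCDF (-μ / 2 - ε / μ)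

open MeasureTheory Real Set

lemma stdNormalPDF_pos (x : ℝ) : 0 < stdNormalPDF x := by
  unfold stdNormalPDF
  positivity

lemma integrable_stdNormalPDF : Integrable stdNormalPDF := by
  have h := integrable_exp_neg_mul_sq (by norm_num : (0:ℝ) < 1/2)
  have := h.const_mul (Real.sqrt (2 * Real.pi))⁻¹
  refine this.congr ?_
  filter_upwards with x
  unfold stdNormalPDF
  ring_nf

lemma integral_stdNormalPDF : ∫ x, stdNormalPDF x = 1 := by
  unfold stdNormalPDF
  rw [MeasureTheory.integral_const_mul]
  have : ∀ x : ℝ, Real.exp (-x ^ 2 / 2) = Real.exp (-(1/2) * x ^ 2) := by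
    intro x; ring_nf
  simp_rw [this, integral_gaussian]
  rw [show π / (1/2) = 2 * π by ring]
  rw [inv_mul_cancel₀ (by positivity)]

lemma stdNormalCDF_lt_one (x : ℝ) : stdNormalCDF x < 1 := by
  have hint := integrable_stdNormalPDF
  have hsplit : stdNormalCDF x + ∫ t in Set.Ioi x, stdNormalPDF t = 1 := by
    rw [stdNormalCDF, intervalIntegral.integral_Iic_add_Ioi hint.integrableOn
      hint.integrableOn, integral_stdNormalPDF]
  have hpos : 0 < ∫ t in Set.Ioi x, stdNormalPDF t := by
    rw [setIntegral_pos_iff_support_of_nonneg_ae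
      (Filter.Eventually.of_forall fun t => (stdNormalPDF_pos t).le)
      hint.integrableOn]
    have : Function.support stdNormalPDF = Set.univ := by
      ext t; simp [Function.mem_support, (stdNormalPDF_pos t).ne']
    rw [this, Set.univ_inter]
    simp [Real.volume_Ioi]
  linarith

theorem gaussF_mem_Ico (μ ε : ℝ) (hμ : 0 < μ) (hε : 0 ≤ ε) :
    0 ≤ gaussF μ ε ∧ gaussF μ ε < 1 := by
  set a := μ / 2 - ε / μ with ha
  set b := -μ / 2 - ε / μ with hb
  have hba : b + μ = a := by rw [ha, hb]; ring
  have hint := integrable_stdNormalPDF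
  -- translation: ∫_{Iic b} φ(t+μ) = Φ(a)
  have htrans : (∫ t in Set.Iic b, stdNormalPDF (t + μ)) = stdNormalCDF a := by
    have hmp : MeasurePreserving (fun t : ℝ => t + μ) volume volume :=
      measurePreserving_add_right volume μ
    have hemb : MeasurableEmbedding (fun t : ℝ => t + μ) :=
      (MeasurableEquiv.addRight μ).measurableEmbedding
    have hpre : (fun t : ℝ => t + μ) ⁻¹' Set.Iic a = Set.Iic b := by
      ext t
      simp only [Set.mem_preimage, Set.mem_Iic]
      constructor <;> intro h <;> linarith
    rw [stdNormalCDF, ← hmp.setIntegral_preimage_emb hemb stdNormalPDF (Set.Iic a), hpre]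
  -- pointwise comparison on Iic b
  have hptwise : ∀ t ∈ Set.Iic b, Real.exp ε * stdNormalPDF t ≤ stdNormalPDF (t + μ) := by
    intro t ht
    simp only [Set.mem_Iic] at ht
    unfold stdNormalPDF
    rw [mul_left_comm, ← Real.exp_add]
    have hc : (Real.sqrt (2 * Real.pi))⁻¹ ≥ 0 := by positivity
    apply mul_le_mul_of_nonneg_left _ hc
    apply Real.exp_le_exp.mpr
    rw [hb] at ht
    have htb : μ * t ≤ μ * (-μ / 2 - ε / μ) := mul_le_mul_of_nonneg_left ht hμ.le
    have h2 : μ * (-μ / 2 - ε / μ) = -μ^2/2 - ε := by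
      field_simp
    nlinarith [htb, h2]
  have hkey : Real.exp ε * stdNormalCDF b ≤ stdNormalCDF a := by
    rw [stdNormalCDF, ← MeasureTheory.integral_const_mul, ← htrans]
    apply setIntegral_mono_on
    · exact (hint.const_mul _).integrableOn
    · exact (hint.comp_add_right μ).integrableOn
    · exact measurableSet_Iic
    · exact hptwise
  constructor
  · rw [gaussF, ← ha, ← hb]; linarith
  · have hb0 : 0 ≤ stdNormalCDF b :=
      setIntegral_nonneg measurableSet_Iic fun t _ => (stdNormalPDF_pos t).le
    have := stdNormalCDF_lt_one a
    rw [gaussF, ← ha, ← hb]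
    nlinarith [Real.exp_pos ε]
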